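/- Let n ≥ 2 and let w = w_1⋯w_n ∈ S_n with w_n = n; set k := cdes_L(w) and w_{n+1} := w_1. Then the (w)-simplex Δ_(w) equals the set of x ∈ ℝ^n satisfying: x_1 + ⋯ + x_n = k, and for every i ∈ [n]: if w_i < w_{i+1} then x_{[w_i, w_{i+1}]} ≥ cdes_L(w|_{[w_i, w_{i+1}]}) − 1, and if w_i > w_{i+1} then x_{[w_{i+1}, w_i]} ≤ cdes_L(w|_{[w_{i+1}, w_i]}). -/

import Mathlib

namespace PositroidPaper

variable {n : ℕ}

/-- The last element `n` of `[n] = {1,…,n}`, realized as the last element of `Fin n`. -/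
def lastF (n : ℕ) [NeZero n] : Fin n :=
  ⟨n - 1, by have := Nat.pos_of_ne_zero (NeZero.ne n); omega⟩

/-- The Gale order `S ≤ᵢ T` with respect to the `i`-order on `Fin n`
(the `i`-order is transported to the natural order on `Fin n` by `a ↦ a - i`). -/
def galeLE (i : Fin n) (S T : Finset (Fin n)) : Prop :=
  List.Forall₂ (· ≤ ·) ((S.image (fun a => a - i)).sort (· ≤ ·))
    ((T.image (fun a => a - i)).sort (· ≤ ·))

/-- A Grassmann necklace of type `(k,n)`. -/
def IsGrassmannNecklace (n k : ℕ) [NeZero n] (J : Fin n → Finset (Fin n)) : Prop :=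
  (∀ i, (J i).card = k) ∧
    ∀ i : Fin n,
      (i ∈ J i → ∃ j : Fin n, J (i + 1) = insert j ((J i).erase i)) ∧
      (i ∉ J i → J (i + 1) = J i)

/-- `B(J)`: the `k`-subsets `B` of `[n]` with `J_i ≤ᵢ B` for all `i`. -/
noncomputable def necklaceBases (n k : ℕ) (J : Fin n → Finset (Fin n)) :
    Finset (Finset (Fin n)) := by
  classical
  exact (Finset.powersetCard k (Finset.univ : Finset (Fin n))).filter
    (fun B => ∀ i, galeLE i (J i) B)

/-- The maximal minor of a `k × n` matrix on the column set `I` (taken in increasing order);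
junk value `0` if `I` does not have exactly `k` elements. -/
noncomputable def colMinor {k n : ℕ} (A : Matrix (Fin k) (Fin n) ℝ) (I : Finset (Fin n)) : ℝ :=
  if h : I.card = k then (A.submatrix id (fun j => ((I.orderIsoOfFin h) j : Fin n))).det else 0

/-- `Bs` is the set of bases of a rank-`k` positroid on `[n]`. -/
def IsPositroidBases (n k : ℕ) (Bs : Finset (Finset (Fin n))) : Prop :=
  ∃ A : Matrix (Fin k) (Fin n) ℝ, A.rank = k ∧
    (∀ I : Finset (Fin n), 0 ≤ colMinor A I) ∧
    ∀ I : Finset (Fin n), I ∈ Bs ↔ I.card = k ∧ colMinor A I ≠ 0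

/-- The 0/1 indicator vector `e_B ∈ ℝ^n` of `B ⊆ [n]`. -/
def indic (B : Finset (Fin n)) : Fin n → ℝ := fun a => if a ∈ B then 1 else 0

/-- The positroid polytope `P_J = conv{e_B : B ∈ B(J)}`. -/
def PJ (n k : ℕ) (J : Fin n → Finset (Fin n)) : Set (Fin n → ℝ) :=
  convexHull ℝ {x | ∃ B ∈ necklaceBases n k J, x = indic B}

/-- The `j`-th element (0-indexed) of `S` in the `i`-order. -/
noncomputable def nthGale [NeZero n] (i : Fin n) (S : Finset (Fin n)) (j : ℕ) : Fin n :=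
  ((S.image (fun a => a - i)).sort (· ≤ ·)).getD j 0 + i

/-- The (closed) cyclic interval `[i,j] ⊆ [n]`. -/
def cycInterval (i j : Fin n) : Finset (Fin n) :=
  Finset.univ.filter (fun a => a - i ≤ j - i)

/-- `x_{[i,j]} = x_i + x_{i+1} + ⋯ + x_{j-1}` (cyclically; the empty sum if `i = j`). -/
def cycSum (x : Fin n → ℝ) (i j : Fin n) : ℝ :=
  ∑ a ∈ Finset.univ.filter (fun a : Fin n => a - i < j - i), x a

/-- The set of cyclic left descents of the word `w|_S`, where `S ⊆ [n]` is totally ordered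
by the `i`-order: an element `a ∈ S` belongs to this set iff either `a` has a successor `b`
in `S` (w.r.t. the `i`-order) occurring to its left in `w`, or `a` is the maximum of `S`,
`S` has at least two elements, and the minimum of `S` occurs to the left of `a` in `w`. -/
noncomputable def cDesL (w : Equiv.Perm (Fin n)) (i : Fin n) (S : Finset (Fin n)) :
    Finset (Fin n) := by
  classical
  exact S.filter (fun a =>
    (∃ b ∈ S, a - i < b - i ∧ (∀ c ∈ S, a - i < c - i → b - i ≤ c - i) ∧ w⁻¹ b < w⁻¹ a) ∨
    ((∀ b ∈ S, b - i ≤ a - i) ∧ ∃ m ∈ S, m ≠ a ∧ (∀ b ∈ S, m - i ≤ b - i) ∧ w⁻¹ m < w⁻¹ a))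

/-- `cdes_L(w|_S)` where `S` is ordered by the `i`-order. -/
noncomputable def cdesL (w : Equiv.Perm (Fin n)) (i : Fin n) (S : Finset (Fin n)) : ℕ :=
  (cDesL w i S).card

/-- The cyclic rotation `w^{(r)}` of the word `w_1 ⋯ w_n` ending at the letter `r`. -/
def rotTo [NeZero n] (w : Equiv.Perm (Fin n)) (r : Fin n) : Equiv.Perm (Fin n) :=
  (Equiv.addRight (w⁻¹ r + 1)).trans w

/-- `I_r(w) = cDes_L(w^{(r)})`. -/
noncomputable def IrFinset [NeZero n] (w : Equiv.Perm (Fin n)) (r : Fin n) : Finset (Fin n) :=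
  cDesL (rotTo w r) 0 Finset.univ

/-- The vertex set `{e_{I_r(w)} : r ∈ [n]}` of the `(w)`-simplex. -/
def vertexSet [NeZero n] (w : Equiv.Perm (Fin n)) : Set (Fin n → ℝ) :=
  {x | ∃ r : Fin n, x = indic (IrFinset w r)}

/-- The `(w)`-simplex `Δ_(w) = conv{e_{I_1(w)},…,e_{I_n(w)}}`. -/
def simplexW [NeZero n] (w : Equiv.Perm (Fin n)) : Set (Fin n → ℝ) :=
  convexHull ℝ (vertexSet w)

/-- The set `D_J` of permutations labelling the circuit triangulation of `P_J`. -/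
noncomputable def DJ (n k : ℕ) [NeZero n] (J : Fin n → Finset (Fin n)) :
    Finset (Equiv.Perm (Fin n)) := by
  classical
  exact Finset.univ.filter (fun w =>
    w (lastF n) = lastF n ∧ cdesL w 0 Finset.univ = k ∧
      ∀ r j : Fin n, galeLE j (J j) (IrFinset w r))

/-- Connectedness of a matroid on `[n]` given by its set of bases: the ground set admits no
partition into nonempty `A`, `Aᶜ` such that every basis is a union of a basis of the
restriction to `A` and one of the restriction to `Aᶜ`, all such unions being bases. -/
def ConnectedBases (Bs : Finset (Finset (Fin n))) : Prop :=
  ¬ ∃ A : Finset (Fin n), A.Nonempty ∧ Aᶜ.Nonempty ∧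
      ∀ B₁ ∈ Bs, ∀ B₂ ∈ Bs, (B₁ ∩ A) ∪ (B₂ \ A) ∈ Bs

/-- `Δ_(u)` and `Δ_(w)` share a common facet. -/
def SharedFacet [NeZero n] (u w : Equiv.Perm (Fin n)) : Prop :=
  (vertexSet u ∩ vertexSet w).ncard = n - 1 ∧
    simplexW u ∩ simplexW w = convexHull ℝ (vertexSet u ∩ vertexSet w)

/-- The graph `Γ_J` of the circuit triangulation of `P_J`. -/
def gammaJ (n k : ℕ) [NeZero n] (J : Fin n → Finset (Fin n)) :
    SimpleGraph (Equiv.Perm (Fin n)) where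
  Adj u w := u ≠ w ∧ u ∈ DJ n k J ∧ w ∈ DJ n k J ∧ SharedFacet u w
  symm := by
    constructor
    rintro u w ⟨hne, hu, hw, hc, hi⟩
    refine ⟨hne.symm, hw, hu, ?_, ?_⟩
    · rwa [Set.inter_comm]
    · rw [Set.inter_comm (simplexW w) (simplexW u), Set.inter_comm (vertexSet w) (vertexSet u)]
      exact hi
  loopless := ⟨fun u h => h.1 rfl⟩

/-- Graph distance in `Γ_J`. -/
noncomputable def distJ (n k : ℕ) [NeZero n] (J : Fin n → Finset (Fin n))
    (u w : Equiv.Perm (Fin n)) : ℕ :=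
  (gammaJ n k J).dist u w

/-- The partial order `≺` on `D_J` determined by `w₀`. -/
def precJ (n k : ℕ) [NeZero n] (J : Fin n → Finset (Fin n))
    (w0 u v : Equiv.Perm (Fin n)) : Prop :=
  u ≠ v ∧ distJ n k J w0 u + distJ n k J u v = distJ n k J w0 v

/-- `cover(w)`: the number of elements of `D_J` covered by `w` in `(D_J, ≺)`. -/
noncomputable def coverNum (n k : ℕ) [NeZero n] (J : Fin n → Finset (Fin n))
    (w0 w : Equiv.Perm (Fin n)) : ℕ :=
  {u : Equiv.Perm (Fin n) | u ∈ DJ n k J ∧ precJ n k J w0 u w ∧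
    ¬ ∃ v ∈ DJ n k J, precJ n k J w0 u v ∧ precJ n k J w0 v w}.ncard

/-- The facet of `Δ_(w)` obtained by deleting the vertex `e_{I_r(w)}`. -/
def facetW [NeZero n] (w : Equiv.Perm (Fin n)) (r : Fin n) : Set (Fin n → ℝ) :=
  convexHull ℝ {x | ∃ r' : Fin n, r' ≠ r ∧ x = indic (IrFinset w r')}

/-- The Ehrhart counting function `L(X,t) = #(t·X ∩ ℤ^m)`. -/
noncomputable def Lcount {m : ℕ} (X : Set (Fin m → ℝ)) (t : ℕ) : ℕ :=
  ((fun x : Fin m → ℝ => (t : ℝ) • x) '' X ∩ {x | ∀ a, ∃ z : ℤ, x a = (z : ℝ)}).ncard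

/-- Projection `ℝ^n → ℝ^{n-1}` onto the first `n-1` coordinates. -/
def proj (n : ℕ) (x : Fin n → ℝ) : Fin (n - 1) → ℝ :=
  fun a => x (Fin.castLE (Nat.sub_le n 1) a)

/-- `F` is an upper facet of `Q ⊆ ℝ^m`. -/
def IsUpperFacet {m : ℕ} (Q F : Set (Fin m → ℝ)) : Prop :=
  ∃ a b : Fin m, a ≤ b ∧ ∃ c : ℤ,
    F = Q ∩ {x | ∑ t ∈ Finset.Icc a b, x t = (c : ℝ)} ∧
    Q ⊆ {x | ∑ t ∈ Finset.Icc a b, x t ≤ (c : ℝ)} ∧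
    Module.finrank ℝ (affineSpan ℝ F).direction = m - 1

/-- The half-open polytope: `Q` with all its upper facets removed. -/
def halfOpen {m : ℕ} (Q : Set (Fin m → ℝ)) : Set (Fin m → ℝ) :=
  Q \ ⋃₀ {F | IsUpperFacet Q F}

/-- The half-open simplex `∇°_w`. -/
def nablaO [NeZero n] (w : Equiv.Perm (Fin n)) : Set (Fin n → ℝ) :=
  {y | 0 < y (w 0) ∧ y (w (lastF n)) ≤ 1 ∧
    ∀ p : Fin n, p ≠ lastF n →
      (w p < w (p + 1) → y (w p) ≤ y (w (p + 1))) ∧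
      (w (p + 1) < w p → y (w p) < y (w (p + 1)))}

/-- `des(w) = #{i ∈ [n-1] : w_i > w_{i+1}}`. -/
noncomputable def desNum [NeZero n] (w : Equiv.Perm (Fin n)) : ℕ := by
  classical
  exact (Finset.univ.filter (fun p : Fin n => p ≠ lastF n ∧ w (p + 1) < w p)).card

/-- `F` is a facet of the polytope `P ⊆ ℝ^n`. -/
def IsFacetOf {n : ℕ} (P F : Set (Fin n → ℝ)) : Prop :=
  ∃ (u : Fin n → ℝ) (c : ℝ),
    F = P ∩ {x | ∑ a, u a * x a = c} ∧ P ⊆ {x | ∑ a, u a * x a ≤ c} ∧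
    Module.finrank ℝ (affineSpan ℝ F).direction + 1 =
      Module.finrank ℝ (affineSpan ℝ P).direction

section Helpers

set_option linter.unusedSectionVars false

variable [NeZero n]

theorem subval (a b : Fin n) : ((a - b : Fin n) : ℕ) = if b.1 ≤ a.1 then a.1 - b.1 else a.1 + n - b.1 := by
  have ha := a.isLt; have hb := b.isLt
  rw [Fin.sub_def]
  show (n - b.1 + a.1) % n = _
  split
  · have h : n - b.1 + a.1 = (a.1 - b.1) + n := by omega
    rw [h, Nat.add_mod_right, Nat.mod_eq_of_lt (by omega)]
  · rw [Nat.mod_eq_of_lt (by omega)]; omega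

theorem addoneval (a : Fin n) : ((a + 1 : Fin n) : ℕ) = if a.1 + 1 = n then 0 else a.1 + 1 := by
  have ha := a.isLt
  have h1 : ((1 : Fin n) : ℕ) = 1 % n := rfl
  rw [Fin.add_def, h1]
  rcases Nat.lt_or_ge 1 n with h | h
  · rw [Nat.mod_eq_of_lt h]
    split
    · simp_all
    · exact Nat.mod_eq_of_lt (by omega)
  · have hn1 : n = 1 := by have := Nat.pos_of_ne_zero (NeZero.ne n); omega
    subst hn1
    have : a.1 = 0 := by omega
    simp [this]

theorem keyId (a b t : Fin n) :
    (((b - a : Fin n) : ℕ) : ℤ) + ((t - b : Fin n) : ℕ) - ((t - a : Fin n) : ℕ)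
      = n * (if ((t - a : Fin n) : ℕ) < ((b - a : Fin n) : ℕ) then 1 else 0) := by
  have ha := a.isLt; have hb := b.isLt; have ht := t.isLt
  simp only [subval]
  split_ifs <;> omega

theorem subval_pos {a b : Fin n} (h : a ≠ b) : 0 < ((a - b : Fin n) : ℕ) := by
  rcases Nat.eq_zero_or_pos ((a - b : Fin n) : ℕ) with h0 | h0
  · exfalso; apply h
    have : (a - b : Fin n) = 0 := Fin.ext h0
    have := sub_eq_zero.mp this
    exact this
  · exact h0

-- CMP: for q1 ≠ q2, (q1 - t).val < (q2 - t).val ↔ (t - (q2+1)).val < ((q1+1) - (q2+1)).val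
theorem cmp_lemma {q1 q2 : Fin n} (t : Fin n) (h : q1 ≠ q2) :
    ((q1 - t : Fin n) : ℕ) < ((q2 - t : Fin n) : ℕ) ↔
      ((t - (q2 + 1) : Fin n) : ℕ) < (((q1 + 1) - (q2 + 1) : Fin n) : ℕ) := by
  have hq : (q1 + 1) - (q2 + 1) = q1 - q2 := by abel
  rw [hq]
  have ha := q1.isLt; have hb := q2.isLt; have ht := t.isLt
  have hne : q1.1 ≠ q2.1 := fun hh => h (Fin.ext hh)
  simp only [subval, addoneval]
  split_ifs <;> omega

open Finset Equiv

def itv (i j : Fin n) : Finset (Fin n) :=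
  Finset.univ.filter (fun a => ((a - i : Fin n) : ℕ) < ((j - i : Fin n) : ℕ))

theorem mem_itv {i j a : Fin n} : a ∈ itv i j ↔ ((a - i : Fin n) : ℕ) < ((j - i : Fin n) : ℕ) := by
  simp [itv]

theorem i_mem_itv {i j : Fin n} (h : i ≠ j) : i ∈ itv i j := by
  rw [mem_itv, sub_self]
  exact subval_pos (Ne.symm h)

theorem j_not_mem_itv {i j : Fin n} : j ∉ itv i j := by
  rw [mem_itv]; exact lt_irrefl _

theorem add_one_ne (hn : 2 ≤ n) (a : Fin n) : a + 1 ≠ a := by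
  intro h
  have h1 : (1 : Fin n) = 0 := by
    have := add_left_cancel (a := a) (b := (1 : Fin n)) (c := (0 : Fin n)) (by rw [add_zero]; exact h)
    exact this
  have : ((1 : Fin n) : ℕ) = 1 % n := rfl
  rw [h1] at this
  simp at this
  omega

theorem shift_mem {i j b : Fin n} (h : i ≠ j) :
    ((b - (i + 1) : Fin n) : ℕ) < ((j - i : Fin n) : ℕ) ↔
      (b = j ∨ (b ≠ i ∧ ((b - i : Fin n) : ℕ) < ((j - i : Fin n) : ℕ))) := by
  have hb := b.isLt; have hi := i.isLt; have hj := j.isLt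
  have hne : i.1 ≠ j.1 := fun hh => h (Fin.ext hh)
  simp only [subval, addoneval, Fin.ext_iff, ne_eq]
  split_ifs <;> omega

theorem image_itv {i j : Fin n} (h : i ≠ j) :
    (itv i j).image (· + 1) = insert j ((itv i j).erase i) := by
  ext b
  simp only [Finset.mem_image, mem_itv, Finset.mem_insert, Finset.mem_erase, ne_eq]
  constructor
  · rintro ⟨a, ha, rfl⟩
    have hb : (a + 1) - (i + 1) = a - i := by abel
    have := (shift_mem (b := a + 1) h).mp (by rw [hb]; exact ha)
    tauto
  · intro hb
    refine ⟨b - 1, ?_, by abel⟩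
    have hb1 : (b - 1) - i = b - (i + 1) := by abel
    rw [hb1]
    rw [shift_mem h]
    tauto

theorem tele (F : Fin n → ℤ) {i j : Fin n} (h : i ≠ j) :
    ∑ a ∈ itv i j, F (a + 1) = (∑ a ∈ itv i j, F a) - F i + F j := by
  have h1 : ∑ a ∈ itv i j, F (a + 1) = ∑ b ∈ (itv i j).image (· + 1), F b :=
    (Finset.sum_image (fun a _ b _ hab => add_left_injective (1 : Fin n) hab)).symm
  rw [h1, image_itv h, Finset.sum_insert (by simp [j_not_mem_itv]), Finset.sum_erase_eq_sub (i_mem_itv h)]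
  ring

theorem tele_univ (F : Fin n → ℤ) :
    ∑ a : Fin n, F (a + 1) = ∑ a : Fin n, F a :=
  Equiv.sum_comp (Equiv.addRight (1 : Fin n)) F

/-- the set `{a : t ∈ [X a, X (a+1))}` where `X a = w⁻¹ a + 1`. -/
def dsc (w : Equiv.Perm (Fin n)) (t : Fin n) : Finset (Fin n) :=
  Finset.univ.filter (fun a =>
    ((t - (w⁻¹ a + 1) : Fin n) : ℕ) < (((w⁻¹ (a + 1) + 1) - (w⁻¹ a + 1) : Fin n) : ℕ))

theorem mem_dsc {w : Equiv.Perm (Fin n)} {t a : Fin n} :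
    a ∈ dsc w t ↔
      ((t - (w⁻¹ a + 1) : Fin n) : ℕ) < (((w⁻¹ (a + 1) + 1) - (w⁻¹ a + 1) : Fin n) : ℕ) := by
  simp [dsc]

theorem cnt (w : Equiv.Perm (Fin n)) (t : Fin n) {i j : Fin n} (h : i ≠ j) :
    (n : ℤ) * ((itv i j ∩ dsc w t).card : ℤ) =
      (∑ a ∈ itv i j, ((((w⁻¹ (a + 1) + 1) - (w⁻¹ a + 1) : Fin n) : ℕ) : ℤ))
        + ((t - (w⁻¹ j + 1) : Fin n) : ℕ) - ((t - (w⁻¹ i + 1) : Fin n) : ℕ) := by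
  have hcard : ((itv i j ∩ dsc w t).card : ℤ)
      = ∑ a ∈ itv i j, (if a ∈ dsc w t then 1 else 0 : ℤ) := by
    rw [← Finset.filter_mem_eq_inter, Finset.card_filter]
    push_cast
    rfl
  rw [hcard, Finset.mul_sum]
  have hterm : ∀ a ∈ itv i j, (n : ℤ) * (if a ∈ dsc w t then 1 else 0)
      = ((((w⁻¹ (a + 1) + 1) - (w⁻¹ a + 1) : Fin n) : ℕ) : ℤ)
        + ((t - (w⁻¹ (a + 1) + 1) : Fin n) : ℕ) - ((t - (w⁻¹ a + 1) : Fin n) : ℕ) := by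
    intro a _
    have hk := keyId (w⁻¹ a + 1) (w⁻¹ (a + 1) + 1) t
    simp only [mem_dsc]
    split_ifs with hc
    · rw [if_pos hc] at hk; linarith
    · rw [if_neg hc] at hk; linarith
  rw [Finset.sum_congr rfl hterm]
  have hsplit : ∑ a ∈ itv i j,
      (((((w⁻¹ (a + 1) + 1) - (w⁻¹ a + 1) : Fin n) : ℕ) : ℤ)
        + ((t - (w⁻¹ (a + 1) + 1) : Fin n) : ℕ) - ((t - (w⁻¹ a + 1) : Fin n) : ℕ))
      = (∑ a ∈ itv i j, ((((w⁻¹ (a + 1) + 1) - (w⁻¹ a + 1) : Fin n) : ℕ) : ℤ))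
        + (∑ a ∈ itv i j, (((t - (w⁻¹ (a + 1) + 1) : Fin n) : ℕ) : ℤ))
        - ∑ a ∈ itv i j, (((t - (w⁻¹ a + 1) : Fin n) : ℕ) : ℤ) := by
    simp only [Finset.sum_sub_distrib, Finset.sum_add_distrib]
  rw [hsplit, tele (fun b => (((t - (w⁻¹ b + 1) : Fin n) : ℕ) : ℤ)) h]
  ring

theorem cnt_univ (w : Equiv.Perm (Fin n)) (t : Fin n) :
    (n : ℤ) * ((dsc w t).card : ℤ)
      = ∑ a : Fin n, ((((w⁻¹ (a + 1) + 1) - (w⁻¹ a + 1) : Fin n) : ℕ) : ℤ) := by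
  have hcard : ((dsc w t).card : ℤ)
      = ∑ a : Fin n, (if a ∈ dsc w t then 1 else 0 : ℤ) := by
    rw [dsc, Finset.card_filter]
    push_cast
    simp [mem_dsc]
  rw [hcard, Finset.mul_sum]
  have hterm : ∀ a ∈ Finset.univ, (n : ℤ) * (if a ∈ dsc w t then 1 else 0 : ℤ)
      = ((((w⁻¹ (a + 1) + 1) - (w⁻¹ a + 1) : Fin n) : ℕ) : ℤ)
        + ((t - (w⁻¹ (a + 1) + 1) : Fin n) : ℕ) - ((t - (w⁻¹ a + 1) : Fin n) : ℕ) := by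
    intro a _
    have hk := keyId (w⁻¹ a + 1) (w⁻¹ (a + 1) + 1) t
    simp only [mem_dsc]
    split_ifs with hc
    · rw [if_pos hc] at hk; linarith
    · rw [if_neg hc] at hk; linarith
  rw [Finset.sum_congr rfl hterm]
  have hsplit : ∑ a : Fin n,
      (((((w⁻¹ (a + 1) + 1) - (w⁻¹ a + 1) : Fin n) : ℕ) : ℤ)
        + ((t - (w⁻¹ (a + 1) + 1) : Fin n) : ℕ) - ((t - (w⁻¹ a + 1) : Fin n) : ℕ))
      = (∑ a : Fin n, ((((w⁻¹ (a + 1) + 1) - (w⁻¹ a + 1) : Fin n) : ℕ) : ℤ))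
        + (∑ a : Fin n, (((t - (w⁻¹ (a + 1) + 1) : Fin n) : ℕ) : ℤ))
        - ∑ a : Fin n, (((t - (w⁻¹ a + 1) : Fin n) : ℕ) : ℤ) := by
    simp only [Finset.sum_sub_distrib, Finset.sum_add_distrib]
  rw [hsplit, tele_univ (fun b => (((t - (w⁻¹ b + 1) : Fin n) : ℕ) : ℤ))]
  ring


theorem mem_dsc0 (hn : 2 ≤ n) {w : Equiv.Perm (Fin n)} {a : Fin n} :
    a ∈ dsc w 0 ↔ w⁻¹ (a + 1) < w⁻¹ a := by
  rw [mem_dsc]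
  have hne : w⁻¹ (a + 1) ≠ w⁻¹ a := fun hh => add_one_ne hn a (w⁻¹.injective hh)
  have := (cmp_lemma (q1 := w⁻¹ (a + 1)) (q2 := w⁻¹ a) 0 hne)
  rw [sub_zero, sub_zero] at this
  rw [← this, Fin.lt_def]

theorem zero_le' (b : Fin n) : (0 : Fin n) ≤ b := by
  rw [Fin.le_def]; simp

theorem cDesL_univ (hn : 2 ≤ n) (u : Equiv.Perm (Fin n)) :
    cDesL u 0 Finset.univ = Finset.univ.filter (fun a => u⁻¹ (a + 1) < u⁻¹ a) := by
  ext a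
  have ha := a.isLt
  simp only [cDesL, Finset.mem_filter, Finset.mem_univ, true_and, sub_zero]
  constructor
  · rintro (⟨b, hab, hmin, hlt⟩ | ⟨hmax, m, hm, hminm, hlt⟩)
    · have hb : b = a + 1 := by
        have h2 := Fin.lt_def.mp hab
        have hbl := b.isLt
        have h1 : a.1 + 1 < n := by omega
        have hone : ((a + 1 : Fin n) : ℕ) = a.1 + 1 := by
          rw [addoneval, if_neg (by omega)]
        have h3 : a < a + 1 := by rw [Fin.lt_def, hone]; omega
        have h4 := hmin (a + 1) trivial h3
        have h6 := Fin.le_def.mp h4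
        exact Fin.ext (by omega)
      rwa [← hb]
    · have hm0 : m = 0 := le_antisymm (hminm 0 trivial) (zero_le' m)
      have halast : a.1 = n - 1 := by
        have := Fin.le_def.mp (hmax ⟨n - 1, by omega⟩ trivial)
        simp at this
        omega
      have ha1 : a + 1 = 0 := by
        apply Fin.ext
        rw [addoneval, if_pos (by omega)]
        simp
      rw [ha1, ← hm0]
      exact hlt
  · intro hlt
    by_cases hl : a.1 = n - 1
    · right
      have ha1 : a + 1 = 0 := by
        apply Fin.ext; rw [addoneval, if_pos (by omega)]; simp
      refine ⟨fun b _ => Fin.le_def.mpr (by have := b.isLt; omega),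
        0, ?_, fun b _ => zero_le' b, ?_⟩
      · intro h0; rw [← h0] at hl; simp at hl; omega
      · rwa [ha1] at hlt
    · left
      have hone : ((a + 1 : Fin n) : ℕ) = a.1 + 1 := by
        rw [addoneval, if_neg (by omega)]
      refine ⟨a + 1, Fin.lt_def.mpr (by omega), ?_, hlt⟩
      intro c _ hc
      rw [Fin.le_def, hone]
      have := Fin.lt_def.mp hc
      omega

theorem mem_cDesL {w : Equiv.Perm (Fin n)} {i : Fin n} {S : Finset (Fin n)} {a : Fin n} :
    a ∈ cDesL w i S ↔ a ∈ S ∧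
      ((∃ b ∈ S, a - i < b - i ∧ (∀ c ∈ S, a - i < c - i → b - i ≤ c - i) ∧ w⁻¹ b < w⁻¹ a) ∨
        ((∀ b ∈ S, b - i ≤ a - i) ∧
          ∃ m ∈ S, m ≠ a ∧ (∀ b ∈ S, m - i ≤ b - i) ∧ w⁻¹ m < w⁻¹ a)) := by
  simp only [cDesL, Finset.mem_filter]

theorem mem_cycInterval {i j a : Fin n} :
    a ∈ cycInterval i j ↔ ((a - i : Fin n) : ℕ) ≤ ((j - i : Fin n) : ℕ) := by
  simp only [cycInterval, Finset.mem_filter, Finset.mem_univ, true_and, Fin.le_def]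

theorem sub_eq_imp {a b i : Fin n} (h : a - i = b - i) : a = b := sub_left_inj.mp h

theorem cDesL_interval (hn : 2 ≤ n) (w : Equiv.Perm (Fin n)) {i j : Fin n} (h : i ≠ j) :
    cDesL w i (cycInterval i j) =
      if w⁻¹ i < w⁻¹ j then insert j (itv i j ∩ dsc w 0) else itv i j ∩ dsc w 0 := by
  have hiS : i ∈ cycInterval i j := by rw [mem_cycInterval]; simp
  have hjS : j ∈ cycInterval i j := by rw [mem_cycInterval]
  have hjn := (j - i).isLt
  ext a
  by_cases haj : a = j
  · subst haj
    have hIff : a ∈ cDesL w i (cycInterval i a) ↔ w⁻¹ i < w⁻¹ a := by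
      rw [mem_cDesL]
      constructor
      · rintro ⟨-, (⟨b, hbS, hab, -, -⟩ | ⟨-, m, hmS, hmne, hminm, hlt⟩)⟩
        · rw [mem_cycInterval] at hbS
          exact absurd (Fin.lt_def.mp hab) (by omega)
        · have hmi : m = i := by
            apply sub_eq_imp (i := i)
            rw [sub_self]
            have h1 := Fin.le_def.mp (hminm i hiS)
            rw [sub_self] at h1
            apply Fin.ext
            simpa using h1
          rwa [hmi] at hlt
      · intro hij
        refine ⟨hjS, Or.inr ⟨?_, i, hiS, h, ?_, hij⟩⟩
        · intro b hbS
          rw [Fin.le_def]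
          exact (mem_cycInterval).mp hbS
        · intro b hbS
          rw [Fin.le_def, sub_self]
          simp
    rw [hIff]
    split_ifs with hw
    · simp [Finset.mem_insert, hw]; exact hw
    · exact iff_of_false hw (fun hc => j_not_mem_itv (Finset.mem_inter.mp hc).1)
  · by_cases hai : a ∈ itv i j
    · have haintv := mem_itv.mp hai
      have hsucc : (((a + 1) - i : Fin n) : ℕ) = ((a - i : Fin n) : ℕ) + 1 := by
        have he : (a + 1) - i = (a - i) + 1 := by abel
        rw [he, addoneval, if_neg (by omega)]
      have ha1S : a + 1 ∈ cycInterval i j := by rw [mem_cycInterval]; omega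
      have haS : a ∈ cycInterval i j := by rw [mem_cycInterval]; omega
      have hIff : a ∈ cDesL w i (cycInterval i j) ↔ w⁻¹ (a + 1) < w⁻¹ a := by
        rw [mem_cDesL]
        constructor
        · rintro ⟨-, (⟨b, hbS, hab, hmin, hlt⟩ | ⟨hmax, -⟩)⟩
          · have hb : b = a + 1 := by
              apply sub_eq_imp (i := i)
              have h1 := Fin.lt_def.mp hab
              have h2 := Fin.le_def.mp (hmin (a + 1) ha1S (Fin.lt_def.mpr (by omega)))
              apply Fin.ext
              omega
            rwa [hb] at hlt
          · exact absurd (Fin.le_def.mp (hmax j hjS)) (by omega)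
        · intro hlt
          refine ⟨haS, Or.inl ⟨a + 1, ha1S, Fin.lt_def.mpr (by omega), ?_, hlt⟩⟩
          intro c hcS hac
          rw [Fin.le_def]
          have := Fin.lt_def.mp hac
          omega
      rw [hIff]
      have hmd : a ∈ dsc w 0 ↔ w⁻¹ (a + 1) < w⁻¹ a := mem_dsc0 hn
      split_ifs with hw
      · simp only [Finset.mem_insert, Finset.mem_inter, haj, false_or, hai, true_and]
        exact hmd.symm
      · simp only [Finset.mem_inter, hai, true_and]
        exact hmd.symm
    · have hanS : a ∉ cycInterval i j := by
        rw [mem_cycInterval]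
        intro hle
        rcases Nat.lt_or_ge ((a - i : Fin n) : ℕ) ((j - i : Fin n) : ℕ) with hlt | hge
        · exact hai (mem_itv.mpr hlt)
        · exact haj (sub_eq_imp (i := i) (Fin.ext (by omega)))
      have hL : a ∉ cDesL w i (cycInterval i j) := fun hc => hanS (mem_cDesL.mp hc).1
      simp only [hL, false_iff]
      split_ifs
      · intro hc
        rcases Finset.mem_insert.mp hc with rfl | hc2
        · exact haj rfl
        · exact hai (Finset.mem_inter.mp hc2).1
      · intro hc
        exact hai (Finset.mem_inter.mp hc).1

theorem cdesL_interval (hn : 2 ≤ n) (w : Equiv.Perm (Fin n)) {i j : Fin n} (h : i ≠ j) :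
    (cdesL w i (cycInterval i j) : ℤ)
      = ((itv i j ∩ dsc w 0).card : ℤ) + (if w⁻¹ i < w⁻¹ j then 1 else 0) := by
  rw [cdesL, cDesL_interval hn w h]
  split_ifs
  · rw [Finset.card_insert_of_notMem (by
      rw [Finset.mem_inter]
      exact fun hc => j_not_mem_itv hc.1)]
    push_cast; ring
  · simp

theorem val_one (hn : 2 ≤ n) : ((1 : Fin n) : ℕ) = 1 := by
  have : ((1 : Fin n) : ℕ) = 1 % n := rfl
  rw [this, Nat.mod_eq_of_lt (by omega)]

theorem D1 (hn : 2 ≤ n) (u : Fin n) :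
    (((u - 1 : Fin n) : ℕ) : ℤ) = (u : ℕ) - 1 + n * (if u = 0 then 1 else 0) := by
  have hu := u.isLt
  have h0 : ((0 : Fin n) : ℕ) = 0 := rfl
  simp only [subval, val_one hn, Fin.ext_iff, h0]
  split_ifs <;> omega

theorem sub_one_eq (t q : Fin n) : t - (q + 1) = (t - q) - 1 := by abel

theorem plus_one_zero_iff (p : Fin n) : (p + 1 : Fin n) = 0 ↔ p.1 = n - 1 := by
  have hp := p.isLt
  have hn := Nat.pos_of_ne_zero (NeZero.ne n)
  rw [Fin.ext_iff]
  have h0 : ((0 : Fin n) : ℕ) = 0 := rfl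
  rw [h0, addoneval]
  by_cases hc : p.1 + 1 = n
  · rw [if_pos hc]
    constructor
    · intro _; omega
    · intro _; rfl
  · rw [if_neg hc]
    constructor
    · intro h1; omega
    · intro h1; omega

theorem inv_eq_iff {w : Equiv.Perm (Fin n)} {r p : Fin n} : w⁻¹ r = p ↔ r = w p := by
  constructor
  · intro h; rw [← h]; exact (Equiv.apply_symm_apply w r).symm
  · intro h; rw [h]; exact Equiv.symm_apply_apply w p

theorem t_eq_iff {w : Equiv.Perm (Fin n)} {r p : Fin n} :
    (w⁻¹ r + 1 = p + 1) ↔ r = w p := by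
  rw [add_left_inj, inv_eq_iff]

theorem cnt_diff (w : Equiv.Perm (Fin n)) (t : Fin n) {i j : Fin n} (h : i ≠ j) :
    (n : ℤ) * ((itv i j ∩ dsc w t).card : ℤ)
      = (n : ℤ) * ((itv i j ∩ dsc w 0).card : ℤ)
        + (((t - (w⁻¹ j + 1) : Fin n) : ℕ) - ((t - (w⁻¹ i + 1) : Fin n) : ℕ)
          - (((0 - (w⁻¹ j + 1) : Fin n) : ℕ) - ((0 - (w⁻¹ i + 1) : Fin n) : ℕ)) : ℤ) := by
  rw [cnt w t h, cnt w 0 h]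
  ring

/-- ascent edge count -/
theorem edge_asc (hn : 2 ≤ n) (w : Equiv.Perm (Fin n)) (hw : w (lastF n) = lastF n)
    {p : Fin n} (hasc : w p < w (p + 1)) (r : Fin n) :
    ((itv (w p) (w (p + 1)) ∩ dsc w (w⁻¹ r + 1)).card : ℤ)
      = (cdesL w (w p) (cycInterval (w p) (w (p + 1))) : ℤ) - 1
        + (if r = w p then 1 else 0) := by
  have hne : w p ≠ w (p + 1) := ne_of_lt hasc
  have hplast : p.1 ≠ n - 1 := by
    intro hl
    have hp : p = lastF n := Fin.ext (by rw [hl]; rfl)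
    rw [hp, hw] at hasc
    have := Fin.lt_def.mp hasc
    have := (w (lastF n + 1)).isLt
    have hlval : (lastF n).1 = n - 1 := rfl
    omega
  have hq1 : ((p + 1 : Fin n) : ℕ) = p.1 + 1 := by
    rw [addoneval, if_neg (by have := p.isLt; omega)]
  have hi : w⁻¹ (w p) = p := Equiv.symm_apply_apply w p
  have hj : w⁻¹ (w (p + 1)) = p + 1 := Equiv.symm_apply_apply w (p + 1)
  set t := w⁻¹ r + 1 with ht
  have hd := cnt_diff w t hne
  rw [hi, hj] at hd
  -- rewrite the two differences using D1
  have e1 : (t - (p + 1 + 1) : Fin n) = (t - (p + 1)) - 1 := by abel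
  have e2 : ((0 : Fin n) - (p + 1 + 1) : Fin n) = ((0 : Fin n) - (p + 1)) - 1 := by abel
  rw [e1, e2, D1 hn (t - (p + 1)), D1 hn ((0 : Fin n) - (p + 1))] at hd
  have hz : ((0 : Fin n) - (p + 1) = 0) ↔ False := by
    simp only [iff_false]
    intro hc
    have : (p + 1 : Fin n) = 0 := by
      have := sub_eq_zero.mp hc
      exact this.symm
    rw [plus_one_zero_iff] at this
    exact hplast this
  have htq : (t - (p + 1) = 0) ↔ (r = w p) := by
    rw [sub_eq_zero, ht, t_eq_iff]
  simp only [hz, htq, if_false] at hd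
  have hcd := cdesL_interval hn w hne
  rw [hi, hj] at hcd
  have hlt : (p : Fin n) < p + 1 := Fin.lt_def.mpr (by rw [hq1]; omega)
  rw [if_pos hlt] at hcd
  have hn0 : (n : ℤ) ≠ 0 := by positivity
  have hkey : ((itv (w p) (w (p + 1)) ∩ dsc w t).card : ℤ)
      = ((itv (w p) (w (p + 1)) ∩ dsc w 0).card : ℤ) + (if r = w p then 1 else 0) := by
    apply mul_left_cancel₀ hn0
    rw [hd]; split_ifs <;> ring
  linarith [hkey, hcd]

/-- descent edge count -/
theorem edge_desc (hn : 2 ≤ n) (w : Equiv.Perm (Fin n))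
    {p : Fin n} (hdesc : w (p + 1) < w p) (r : Fin n) :
    ((itv (w (p + 1)) (w p) ∩ dsc w (w⁻¹ r + 1)).card : ℤ)
      = (cdesL w (w (p + 1)) (cycInterval (w (p + 1)) (w p)) : ℤ)
        - (if r = w p then 1 else 0) := by
  have hne : w (p + 1) ≠ w p := ne_of_lt hdesc
  have hi : w⁻¹ (w (p + 1)) = p + 1 := Equiv.symm_apply_apply w (p + 1)
  have hj : w⁻¹ (w p) = p := Equiv.symm_apply_apply w p
  set t := w⁻¹ r + 1 with ht
  have hd := cnt_diff w t hne
  rw [hi, hj] at hd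
  have e1 : (t - (p + 1 + 1) : Fin n) = (t - (p + 1)) - 1 := by abel
  have e2 : ((0 : Fin n) - (p + 1 + 1) : Fin n) = ((0 : Fin n) - (p + 1)) - 1 := by abel
  rw [e1, e2, D1 hn (t - (p + 1)), D1 hn ((0 : Fin n) - (p + 1))] at hd
  have htq : (t - (p + 1) = 0) ↔ (r = w p) := by
    rw [sub_eq_zero, ht, t_eq_iff]
  have hz : ((0 : Fin n) - (p + 1) = 0) ↔ ((p + 1 : Fin n) = 0) := by
    rw [sub_eq_zero]
    exact ⟨fun hh => hh.symm, fun hh => hh.symm⟩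
  simp only [htq, hz] at hd
  have hcd := cdesL_interval hn w hne
  rw [hi, hj] at hcd
  have hcc : (if w⁻¹ (w (p+1)) < w⁻¹ (w p) then (1:ℤ) else 0) = (if (p + 1 : Fin n) = 0 then 1 else 0) := by
    rw [hi, hj]
    by_cases hc : (p + 1 : Fin n) = 0
    · rw [if_pos hc, if_pos (by
        rw [hc]
        rw [Fin.lt_def]
        have h0 : ((0 : Fin n) : ℕ) = 0 := rfl
        rw [h0]
        have := plus_one_zero_iff p |>.mp hc
        omega)]
    · rw [if_neg hc, if_neg (by
        rw [Fin.lt_def, addoneval, if_neg (by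
          intro hcc
          exact hc (plus_one_zero_iff p |>.mpr (by have := p.isLt; omega)))]
        omega)]
  rw [hi, hj] at hcc
  rw [hcc] at hcd
  have hn0 : (n : ℤ) ≠ 0 := by positivity
  have hkey : ((itv (w (p + 1)) (w p) ∩ dsc w t).card : ℤ)
      = ((itv (w (p + 1)) (w p) ∩ dsc w 0).card : ℤ) + (if (p + 1 : Fin n) = 0 then 1 else 0)
        - (if r = w p then 1 else 0) := by
    apply mul_left_cancel₀ hn0
    rw [hd]; split_ifs <;> ring
  linarith [hkey, hcd]

theorem rotTo_inv_apply (w : Equiv.Perm (Fin n)) (r a : Fin n) :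
    (rotTo w r)⁻¹ a = w⁻¹ a - (w⁻¹ r + 1) := by
  have : rotTo w r (w⁻¹ a - (w⁻¹ r + 1)) = a := by
    simp only [rotTo, Equiv.trans_apply, Equiv.coe_addRight]
    rw [sub_add_cancel]
    exact Equiv.apply_symm_apply w a
  rw [Equiv.Perm.inv_eq_iff_eq]
  exact this.symm

theorem IrFinset_eq (hn : 2 ≤ n) (w : Equiv.Perm (Fin n)) (r : Fin n) :
    IrFinset w r = dsc w (w⁻¹ r + 1) := by
  rw [IrFinset, cDesL_univ hn]
  ext a
  simp only [Finset.mem_filter, Finset.mem_univ, true_and, mem_dsc]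
  rw [rotTo_inv_apply, rotTo_inv_apply]
  have hne : w⁻¹ (a + 1) ≠ w⁻¹ a := fun hh => add_one_ne hn a (w⁻¹.injective hh)
  rw [Fin.lt_def]
  exact cmp_lemma (w⁻¹ r + 1) hne

theorem card_dsc_const (w : Equiv.Perm (Fin n)) (t : Fin n) :
    (dsc w t).card = (dsc w 0).card := by
  have h1 := cnt_univ w t
  have h2 := cnt_univ w 0
  have hn0 : (n : ℤ) ≠ 0 := Nat.cast_ne_zero.mpr (NeZero.ne n)
  have := mul_left_cancel₀ hn0 (h1.trans h2.symm)
  exact_mod_cast this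

theorem cdesL_univ_card (hn : 2 ≤ n) (w : Equiv.Perm (Fin n)) :
    cdesL w 0 Finset.univ = (dsc w 0).card := by
  rw [cdesL, cDesL_univ hn w]
  congr 1
  ext a
  simp only [Finset.mem_filter, Finset.mem_univ, true_and]
  exact (mem_dsc0 hn).symm

theorem card_Ir (hn : 2 ≤ n) (w : Equiv.Perm (Fin n)) (r : Fin n) :
    (IrFinset w r).card = cdesL w 0 Finset.univ := by
  rw [IrFinset_eq hn, card_dsc_const, cdesL_univ_card hn]

theorem sum_indic (B : Finset (Fin n)) : ∑ a, indic B a = (B.card : ℝ) := by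
  unfold indic
  rw [Finset.sum_ite_mem, Finset.univ_inter, Finset.sum_const, nsmul_eq_mul, mul_one]

theorem cycSum_indic (B : Finset (Fin n)) (i j : Fin n) :
    cycSum (indic B) i j = ((itv i j ∩ B).card : ℝ) := by
  rw [cycSum]
  have hset : Finset.univ.filter (fun a : Fin n => a - i < j - i) = itv i j := by
    ext a; simp only [itv, Finset.mem_filter, Finset.mem_univ, true_and, Fin.lt_def]
  rw [hset, ← Finset.filter_mem_eq_inter, Finset.card_filter]
  unfold indic
  push_cast
  rfl

theorem cycSum_eq_sum_itv (x : Fin n → ℝ) (i j : Fin n) :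
    cycSum x i j = ∑ a ∈ itv i j, x a := by
  have hset : Finset.univ.filter (fun a : Fin n => a - i < j - i) = itv i j := by
    ext a; simp only [itv, Finset.mem_filter, Finset.mem_univ, true_and, Fin.lt_def]
  rw [cycSum, hset]

theorem vertex_sum (hn : 2 ≤ n) (w : Equiv.Perm (Fin n)) (r : Fin n) :
    ∑ a, indic (IrFinset w r) a = (cdesL w 0 Finset.univ : ℝ) := by
  rw [sum_indic, card_Ir hn]

theorem vertex_asc (hn : 2 ≤ n) (w : Equiv.Perm (Fin n)) (hw : w (lastF n) = lastF n)
    {p : Fin n} (hasc : w p < w (p + 1)) (r : Fin n) :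
    cycSum (indic (IrFinset w r)) (w p) (w (p + 1))
      = (cdesL w (w p) (cycInterval (w p) (w (p + 1))) : ℝ) - 1
        + (if r = w p then 1 else 0) := by
  rw [IrFinset_eq hn, cycSum_indic]
  have h := edge_asc hn w hw hasc r
  split_ifs at h ⊢ <;> exact_mod_cast h

theorem vertex_desc (hn : 2 ≤ n) (w : Equiv.Perm (Fin n))
    {p : Fin n} (hdesc : w (p + 1) < w p) (r : Fin n) :
    cycSum (indic (IrFinset w r)) (w (p + 1)) (w p)
      = (cdesL w (w (p + 1)) (cycInterval (w (p + 1)) (w p)) : ℝ)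
        - (if r = w p then 1 else 0) := by
  rw [IrFinset_eq hn, cycSum_indic]
  have h := edge_desc hn w hdesc r
  split_ifs at h ⊢ <;> exact_mod_cast h

theorem itv_compl {i j : Fin n} (h : i ≠ j) : itv j i = Finset.univ \ itv i j := by
  have hne : i.1 ≠ j.1 := fun hh => h (Fin.ext hh)
  have hi := i.isLt; have hj := j.isLt
  ext a
  have ha := a.isLt
  simp only [itv, Finset.mem_filter, Finset.mem_univ, true_and, Finset.mem_sdiff, not_lt]
  simp only [subval]
  split_ifs <;> omega

theorem cnt_edges (w : Equiv.Perm (Fin n)) (t : Fin n) :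
    (n : ℤ) * (((Finset.univ.filter (fun p : Fin n => t ∈ itv (w p) (w (p + 1)))).card : ℤ))
      = ∑ p : Fin n, (((w (p + 1) - w p : Fin n) : ℕ) : ℤ) := by
  have hcard : (((Finset.univ.filter (fun p : Fin n => t ∈ itv (w p) (w (p + 1)))).card : ℤ))
      = ∑ p : Fin n, (if t ∈ itv (w p) (w (p + 1)) then 1 else 0 : ℤ) := by
    rw [Finset.card_filter]; push_cast; rfl
  rw [hcard, Finset.mul_sum]
  have hterm : ∀ p ∈ Finset.univ, (n : ℤ) * (if t ∈ itv (w p) (w (p + 1)) then 1 else 0 : ℤ)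
      = (((w (p + 1) - w p : Fin n) : ℕ) : ℤ)
        + ((t - w (p + 1) : Fin n) : ℕ) - ((t - w p : Fin n) : ℕ) := by
    intro p _
    have hk := keyId (w p) (w (p + 1)) t
    simp only [mem_itv]
    split_ifs with hc
    · rw [if_pos hc] at hk; linarith
    · rw [if_neg hc] at hk; linarith
  rw [Finset.sum_congr rfl hterm]
  simp only [Finset.sum_sub_distrib, Finset.sum_add_distrib]
  rw [tele_univ (fun b => (((t - w b : Fin n) : ℕ) : ℤ))]
  ring

theorem count_edges_const (w : Equiv.Perm (Fin n)) (t t' : Fin n) :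
    ((Finset.univ.filter (fun p : Fin n => t ∈ itv (w p) (w (p + 1)))).card)
      = ((Finset.univ.filter (fun p : Fin n => t' ∈ itv (w p) (w (p + 1)))).card) := by
  have h1 := cnt_edges w t
  have h2 := cnt_edges w t'
  have hn0 : (n : ℤ) ≠ 0 := Nat.cast_ne_zero.mpr (NeZero.ne n)
  exact_mod_cast mul_left_cancel₀ hn0 (h1.trans h2.symm)

theorem sum_edge_sums (w : Equiv.Perm (Fin n)) (z : Fin n → ℝ) (hz : ∑ a, z a = 0) :
    ∑ p : Fin n, (∑ a ∈ itv (w p) (w (p + 1)), z a) = 0 := by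
  have hswap : ∑ p : Fin n, (∑ a ∈ itv (w p) (w (p + 1)), z a)
      = ∑ a : Fin n, ∑ p : Fin n, (if a ∈ itv (w p) (w (p + 1)) then z a else 0) := by
    rw [Finset.sum_comm]
    apply Finset.sum_congr rfl
    intro p _
    rw [Finset.sum_ite_mem, Finset.univ_inter]
  rw [hswap]
  have hterm : ∀ a : Fin n, ∑ p : Fin n, (if a ∈ itv (w p) (w (p + 1)) then z a else 0)
      = (((Finset.univ.filter (fun p : Fin n => (0 : Fin n) ∈ itv (w p) (w (p + 1)))).card : ℝ))
          * z a := by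
    intro a
    have : ∑ p : Fin n, (if a ∈ itv (w p) (w (p + 1)) then z a else 0)
        = (((Finset.univ.filter (fun p : Fin n => a ∈ itv (w p) (w (p + 1)))).card : ℝ)) * z a := by
      rw [Finset.sum_ite, Finset.sum_const, Finset.sum_const_zero, add_zero, nsmul_eq_mul]
    rw [this, count_edges_const w a (0 : Fin n)]
  rw [Finset.sum_congr rfl (fun a _ => hterm a), ← Finset.mul_sum, hz, mul_zero]

theorem span_zero (hn : 2 ≤ n) (w : Equiv.Perm (Fin n)) (z : Fin n → ℝ)
    (hz : ∑ a, z a = 0) (he : ∀ p : Fin n, ∑ a ∈ itv (w p) (w (p + 1)), z a = 0) :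
    ∀ a, z a = 0 := by
  set PS : ℕ → ℝ := fun m => ∑ b ∈ Finset.univ.filter (fun b : Fin n => b.1 < m), z b with hPS
  have hPS0 : PS 0 = 0 := by
    simp [hPS]
  have hPSn : ∀ m, n ≤ m → PS m = 0 := by
    intro m hm
    have : Finset.univ.filter (fun b : Fin n => b.1 < m) = Finset.univ := by
      apply Finset.filter_true_of_mem
      intro b _
      have := b.isLt
      omega
    rw [hPS]
    simp only [this]
    exact hz
  have hcyc : ∀ i j : Fin n, i.1 ≤ j.1 → (∑ a ∈ itv i j, z a) = PS j.1 - PS i.1 := by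
    intro i j hij
    have hset : itv i j = Finset.univ.filter (fun a : Fin n => i.1 ≤ a.1 ∧ a.1 < j.1) := by
      ext a
      have ha := a.isLt; have hi := i.isLt; have hj := j.isLt
      simp only [itv, Finset.mem_filter, Finset.mem_univ, true_and, subval]
      split_ifs <;> omega
    have hsplit := Finset.sum_filter_add_sum_filter_not
      (Finset.univ.filter (fun b : Fin n => b.1 < j.1)) (fun b : Fin n => b.1 < i.1) z
    rw [Finset.filter_filter, Finset.filter_filter] at hsplit
    have he1 : Finset.univ.filter (fun b : Fin n => b.1 < j.1 ∧ b.1 < i.1)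
        = Finset.univ.filter (fun b : Fin n => b.1 < i.1) := by
      apply Finset.filter_congr
      intro b _
      constructor
      · tauto
      · intro hb; exact ⟨by omega, hb⟩
    have he2 : Finset.univ.filter (fun b : Fin n => b.1 < j.1 ∧ ¬ b.1 < i.1)
        = itv i j := by
      rw [hset]
      apply Finset.filter_congr
      intro b _
      constructor
      · intro hb; exact ⟨by omega, hb.1⟩
      · intro hb; exact ⟨hb.2, by omega⟩
    rw [he1, he2] at hsplit
    rw [hPS]
    simp only
    linarith [hsplit]
  have hgen : ∀ i j : Fin n, (∑ a ∈ itv i j, z a) = PS j.1 - PS i.1 := by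
    intro i j
    rcases le_or_gt i.1 j.1 with hij | hij
    · exact hcyc i j hij
    · have hne : i ≠ j := by
        intro hh; rw [hh] at hij; omega
      rw [itv_compl (Ne.symm hne)]
      rw [Finset.sum_sdiff_eq_sub (Finset.subset_univ _), hz, hcyc j i (by omega)]
      ring
  have hstep : ∀ p : Fin n, PS (w (p + 1)).1 = PS (w p).1 := by
    intro p
    have := he p
    rw [hgen (w p) (w (p + 1))] at this
    linarith
  have hallm : ∀ m : ℕ, (hm : m < n) → PS (w ⟨m, hm⟩).1 = PS (w 0).1 := by
    intro m
    induction m with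
    | zero =>
      intro hm
      have : (⟨0, hm⟩ : Fin n) = 0 := by
        apply Fin.ext; simp
      rw [this]
    | succ k ih =>
      intro hm
      have hk : k < n := by omega
      have hsucc : (⟨k + 1, hm⟩ : Fin n) = (⟨k, hk⟩ : Fin n) + 1 := by
        apply Fin.ext
        rw [addoneval]
        simp only
        rw [if_neg (by omega)]
      rw [hsucc, hstep ⟨k, hk⟩, ih hk]
  have hconst : ∀ a : Fin n, PS a.1 = PS (w 0).1 := by
    intro a
    have ha : a = w (w⁻¹ a) := (Equiv.apply_symm_apply w a).symm
    rw [ha]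
    have : w⁻¹ a = ⟨(w⁻¹ a).1, (w⁻¹ a).isLt⟩ := by apply Fin.ext; rfl
    rw [this]
    exact hallm (w⁻¹ a).1 (w⁻¹ a).isLt
  have hzero : ∀ a : Fin n, PS a.1 = 0 := by
    intro a
    have h0 : PS ((0 : Fin n)).1 = PS (w 0).1 := hconst 0
    have h0' : ((0 : Fin n)).1 = 0 := rfl
    rw [h0', hPS0] at h0
    rw [hconst a, ← h0]
  intro a
  have hins : Finset.univ.filter (fun b : Fin n => b.1 < a.1 + 1)
      = insert a (Finset.univ.filter (fun b : Fin n => b.1 < a.1)) := by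
    ext b
    simp only [Finset.mem_filter, Finset.mem_univ, true_and, Finset.mem_insert, Fin.ext_iff]
    omega
  have hz1 : PS (a.1 + 1) = z a + PS a.1 := by
    rw [hPS]
    simp only
    rw [hins, Finset.sum_insert (by simp)]
  have hz2 : PS (a.1 + 1) = 0 := by
    rcases Nat.lt_or_ge (a.1 + 1) n with hlt | hge
    · have : a.1 + 1 = ((a + 1 : Fin n)).1 := by
        rw [addoneval, if_neg (by omega)]
      rw [this]
      exact hzero (a + 1)
    · exact hPSn _ hge
  rw [hz2, hzero a] at hz1
  linarith

end Helpers

theorem w_simplex_facet_description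
    (n : ℕ) [NeZero n] (hn : 2 ≤ n) (w : Equiv.Perm (Fin n))
    (hw : w (lastF n) = lastF n) :
    simplexW w =
      {x : Fin n → ℝ | (∑ a, x a) = (cdesL w 0 Finset.univ : ℝ) ∧
        ∀ p : Fin n,
          (w p < w (p + 1) →
            (cdesL w (w p) (cycInterval (w p) (w (p + 1))) : ℝ) - 1 ≤
              cycSum x (w p) (w (p + 1))) ∧
          (w (p + 1) < w p →
            cycSum x (w (p + 1)) (w p) ≤
              (cdesL w (w (p + 1)) (cycInterval (w (p + 1)) (w p)) : ℝ))} := by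
  classical
  have hone : (1 : Fin n) ≠ 0 := by
    intro h1
    have h2 : ((1 : Fin n) : ℕ) = 0 := by rw [h1]; rfl
    rw [val_one hn] at h2
    omega
  have hne1 : ∀ p : Fin n, w p ≠ w (p + 1) := by
    intro p h
    have hp := w.injective h
    have h2 : (1 : Fin n) = 0 := by
      have h3 := congrArg (fun q => q - p) hp
      simpa using h3.symm
    exact hone h2
  have htri : ∀ p : Fin n, ¬ w p < w (p + 1) → w (p + 1) < w p := by
    intro p h
    rcases lt_or_gt_of_ne (hne1 p) with h1 | h1
    · exact absurd h1 h
    · exact h1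
  apply Set.eq_of_subset_of_subset
  · -- simplexW ⊆ RHS
    apply convexHull_min
    · rintro x ⟨r, rfl⟩
      constructor
      · exact vertex_sum hn w r
      · intro p
        constructor
        · intro hasc
          rw [vertex_asc hn w hw hasc r]
          split_ifs <;> linarith
        · intro hdesc
          rw [vertex_desc hn w hdesc r]
          split_ifs <;> linarith
    · -- convexity
      rintro x hx y hy a b ha hb hab
      obtain ⟨hx1, hx2⟩ := hx
      obtain ⟨hy1, hy2⟩ := hy
      have happ : ∀ c : Fin n, (a • x + b • y) c = a * x c + b * y c := fun c => rfl
      have hcsum : ∀ i j : Fin n, cycSum (a • x + b • y) i j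
          = a * cycSum x i j + b * cycSum y i j := by
        intro i j
        simp only [cycSum_eq_sum_itv, happ]
        rw [Finset.mul_sum, Finset.mul_sum, ← Finset.sum_add_distrib]
      constructor
      · simp only [happ]
        rw [Finset.sum_add_distrib, ← Finset.mul_sum, ← Finset.mul_sum, hx1, hy1]
        calc a * (cdesL w 0 Finset.univ : ℝ) + b * (cdesL w 0 Finset.univ : ℝ)
            = (a + b) * (cdesL w 0 Finset.univ : ℝ) := by ring
          _ = _ := by rw [hab, one_mul]
      · intro p
        constructor
        · intro hasc
          rw [hcsum]
          have h1 := mul_le_mul_of_nonneg_left ((hx2 p).1 hasc) ha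
          have h2 := mul_le_mul_of_nonneg_left ((hy2 p).1 hasc) hb
          nlinarith [h1, h2]
        · intro hdesc
          rw [hcsum]
          have h1 := mul_le_mul_of_nonneg_left ((hx2 p).2 hdesc) ha
          have h2 := mul_le_mul_of_nonneg_left ((hy2 p).2 hdesc) hb
          nlinarith [h1, h2]
  · -- RHS ⊆ simplexW
    rintro x ⟨hxsum, hxineq⟩
    obtain ⟨V, hVdef⟩ : ∃ V : Fin n → (Fin n → ℝ), ∀ r, V r = indic (IrFinset w r) :=
      ⟨fun r => indic (IrFinset w r), fun _ => rfl⟩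
    obtain ⟨μ, hμdef⟩ : ∃ μ : Fin n → ℝ, ∀ p, μ p =
        if w p < w (p + 1) then
          cycSum x (w p) (w (p + 1))
            - (cdesL w (w p) (cycInterval (w p) (w (p + 1))) : ℝ) + 1
        else
          (cdesL w (w (p + 1)) (cycInterval (w (p + 1)) (w p)) : ℝ)
            - cycSum x (w (p + 1)) (w p) :=
      ⟨_, fun _ => rfl⟩
    have hμ0 : ∀ p, 0 ≤ μ p := by
      intro p
      rw [hμdef]
      split_ifs with hc
      · have := (hxineq p).1 hc
        linarith
      · have := (hxineq p).2 (htri p hc)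
        linarith
    have hVsum : ∀ r, ∑ a, V r a = (cdesL w 0 Finset.univ : ℝ) := by
      intro r; rw [hVdef]; exact vertex_sum hn w r
    have hVasc : ∀ (r p : Fin n), w p < w (p + 1) →
        ∑ a ∈ itv (w p) (w (p + 1)), V r a
          = (cdesL w (w p) (cycInterval (w p) (w (p + 1))) : ℝ) - 1
            + (if r = w p then 1 else 0) := by
      intro r p hc
      rw [← cycSum_eq_sum_itv, hVdef]
      exact vertex_asc hn w hw hc r
    have hVdesc : ∀ (r p : Fin n), w (p + 1) < w p →
        ∑ a ∈ itv (w (p + 1)) (w p), V r a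
          = (cdesL w (w (p + 1)) (cycInterval (w (p + 1)) (w p)) : ℝ)
            - (if r = w p then 1 else 0) := by
      intro r p hc
      rw [← cycSum_eq_sum_itv, hVdef]
      exact vertex_desc hn w hc r
    -- sum of μ equals 1
    have hμsum : ∑ p, μ p = 1 := by
      obtain ⟨z, hzdef⟩ : ∃ z : Fin n → ℝ, ∀ a, z a = x a - V (w 0) a :=
        ⟨_, fun _ => rfl⟩
      have hzsum : ∑ a, z a = 0 := by
        rw [Finset.sum_congr rfl (fun a _ => hzdef a), Finset.sum_sub_distrib,
          hxsum, hVsum (w 0)]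
        ring
      have hsplit : ∀ p : Fin n,
          μ p = (if (w 0 : Fin n) = w p then (1 : ℝ) else 0)
            + ∑ a ∈ itv (w p) (w (p + 1)), z a := by
        intro p
        have hzs : ∀ (i j : Fin n), ∑ a ∈ itv i j, z a
            = (∑ a ∈ itv i j, x a) - ∑ a ∈ itv i j, V (w 0) a := by
          intro i j
          rw [Finset.sum_congr rfl (fun a _ => hzdef a), Finset.sum_sub_distrib]
        by_cases hc : w p < w (p + 1)
        · have hVp := hVasc (w 0) p hc
          rw [hμdef, if_pos hc]
          have hcx := cycSum_eq_sum_itv x (w p) (w (p + 1))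
          have hzz := hzs (w p) (w (p + 1))
          linarith [hVp, hcx, hzz]
        · have hdesc := htri p hc
          have hVp := hVdesc (w 0) p hdesc
          rw [hμdef, if_neg hc]
          have hcompl : ∑ a ∈ itv (w p) (w (p + 1)), z a
              + ∑ a ∈ itv (w (p + 1)) (w p), z a = 0 := by
            rw [itv_compl (hne1 p), Finset.sum_sdiff_eq_sub (Finset.subset_univ _), hzsum]
            ring
          have hcx := cycSum_eq_sum_itv x (w (p + 1)) (w p)
          have hzz := hzs (w (p + 1)) (w p)
          linarith [hVp, hcx, hzz, hcompl]
      rw [Finset.sum_congr rfl (fun p _ => hsplit p), Finset.sum_add_distrib,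
        sum_edge_sums w z hzsum, add_zero]
      have hiff : ∀ p : Fin n, (if (w 0 : Fin n) = w p then (1 : ℝ) else 0)
          = (if p = 0 then (1 : ℝ) else 0) := by
        intro p
        by_cases hc : p = 0
        · rw [if_pos hc, if_pos (by rw [hc])]
        · rw [if_neg hc, if_neg (fun hh => hc (w.injective hh).symm)]
      rw [Finset.sum_congr rfl (fun p _ => hiff p)]
      simp
    obtain ⟨lam, hlamdef⟩ : ∃ lam : Fin n → ℝ, ∀ r, lam r = μ (w⁻¹ r) :=
      ⟨_, fun _ => rfl⟩
    have hlam0 : ∀ r, 0 ≤ lam r := fun r => by rw [hlamdef]; exact hμ0 _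
    have hlamsum : ∑ r, lam r = 1 := by
      rw [Finset.sum_congr rfl (fun r _ => hlamdef r)]
      rw [Equiv.sum_comp (w⁻¹ : Equiv.Perm (Fin n)) μ]
      exact hμsum
    have hlamwp : ∀ p : Fin n, lam (w p) = μ p := by
      intro p
      rw [hlamdef, show w⁻¹ (w p) = p from Equiv.symm_apply_apply w p]
    obtain ⟨y, hydef⟩ : ∃ y : Fin n → ℝ, ∀ a, y a = ∑ r, lam r * V r a :=
      ⟨_, fun _ => rfl⟩
    have hysum : ∑ a, y a = (cdesL w 0 Finset.univ : ℝ) := by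
      rw [Finset.sum_congr rfl (fun a _ => hydef a), Finset.sum_comm]
      have : ∀ r : Fin n, ∑ a, lam r * V r a = lam r * (cdesL w 0 Finset.univ : ℝ) := by
        intro r
        rw [← Finset.mul_sum, hVsum]
      rw [Finset.sum_congr rfl (fun r _ => this r), ← Finset.sum_mul, hlamsum, one_mul]
    have hycyc : ∀ i j : Fin n, ∑ a ∈ itv i j, y a
        = ∑ r, lam r * ∑ a ∈ itv i j, V r a := by
      intro i j
      rw [Finset.sum_congr rfl (fun a _ => hydef a), Finset.sum_comm]
      exact Finset.sum_congr rfl (fun r _ => (Finset.mul_sum _ _ _).symm)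
    have hlamsplit : ∀ (p : Fin n) (c d : ℝ),
        ∑ r, lam r * (c + d * (if r = w p then (1 : ℝ) else 0)) = c + d * μ p := by
      intro p c d
      have hterm : ∀ r : Fin n, lam r * (c + d * (if r = w p then (1 : ℝ) else 0))
          = lam r * c + d * (if r = w p then lam r else 0) := by
        intro r
        split_ifs <;> ring
      rw [Finset.sum_congr rfl (fun r _ => hterm r), Finset.sum_add_distrib,
        ← Finset.sum_mul, hlamsum, one_mul, ← Finset.mul_sum,
        Finset.sum_ite_eq' Finset.univ (w p) lam]
      simp [hlamwp p]
    have hedgeeq : ∀ p : Fin n, ∑ a ∈ itv (w p) (w (p + 1)), (x a - y a) = 0 := by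
      intro p
      have hsub : ∀ (i j : Fin n), ∑ a ∈ itv i j, (x a - y a)
          = (∑ a ∈ itv i j, x a) - ∑ a ∈ itv i j, y a := fun i j =>
        Finset.sum_sub_distrib _ _
      by_cases hc : w p < w (p + 1)
      · have h1 : ∑ a ∈ itv (w p) (w (p + 1)), y a
            = ((cdesL w (w p) (cycInterval (w p) (w (p + 1))) : ℝ) - 1) + 1 * μ p := by
          rw [hycyc]
          have hterm : ∀ r : Fin n, lam r * (∑ a ∈ itv (w p) (w (p + 1)), V r a)
              = lam r * (((cdesL w (w p) (cycInterval (w p) (w (p + 1))) : ℝ) - 1)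
                + 1 * (if r = w p then (1 : ℝ) else 0)) := by
            intro r
            rw [hVasc r p hc]
            split_ifs <;> ring
          rw [Finset.sum_congr rfl (fun r _ => hterm r), hlamsplit p _ _]
        have h2 : μ p = cycSum x (w p) (w (p + 1))
            - (cdesL w (w p) (cycInterval (w p) (w (p + 1))) : ℝ) + 1 := by
          rw [hμdef, if_pos hc]
        have hcx := cycSum_eq_sum_itv x (w p) (w (p + 1))
        rw [hsub]
        linarith [h1, h2, hcx]
      · have hdesc := htri p hc
        have h1 : ∑ a ∈ itv (w (p + 1)) (w p), y a
            = (cdesL w (w (p + 1)) (cycInterval (w (p + 1)) (w p)) : ℝ) + (-1) * μ p := by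
          rw [hycyc]
          have hterm : ∀ r : Fin n, lam r * (∑ a ∈ itv (w (p + 1)) (w p), V r a)
              = lam r * ((cdesL w (w (p + 1)) (cycInterval (w (p + 1)) (w p)) : ℝ)
                + (-1) * (if r = w p then (1 : ℝ) else 0)) := by
            intro r
            rw [hVdesc r p hdesc]
            split_ifs <;> ring
          rw [Finset.sum_congr rfl (fun r _ => hterm r), hlamsplit p _ _]
        have h2 : μ p = (cdesL w (w (p + 1)) (cycInterval (w (p + 1)) (w p)) : ℝ)
            - cycSum x (w (p + 1)) (w p) := by
          rw [hμdef, if_neg hc]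
        have hrev : ∑ a ∈ itv (w (p + 1)) (w p), (x a - y a) = 0 := by
          have hcx := cycSum_eq_sum_itv x (w (p + 1)) (w p)
          rw [hsub]
          linarith [h1, h2, hcx]
        have huniv : ∑ a, (x a - y a) = 0 := by
          rw [Finset.sum_sub_distrib, hxsum, hysum]
          ring
        have hcompl : ∑ a ∈ itv (w p) (w (p + 1)), (x a - y a)
            + ∑ a ∈ itv (w (p + 1)) (w p), (x a - y a) = 0 := by
          rw [itv_compl (hne1 p), Finset.sum_sdiff_eq_sub (Finset.subset_univ _), huniv]
          ring
        linarith [hrev, hcompl]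
    have hzall := span_zero hn w (fun a => x a - y a)
      (by rw [Finset.sum_sub_distrib, hxsum, hysum]; ring) hedgeeq
    have hxy : x = y := funext fun a => sub_eq_zero.mp (hzall a)
    rw [hxy]
    have hcm : y = Finset.univ.centerMass lam V := by
      rw [Finset.centerMass_eq_of_sum_1 _ _ hlamsum]
      funext a
      rw [hydef, Finset.sum_apply]
      exact Finset.sum_congr rfl (fun r _ => rfl)
    show y ∈ convexHull ℝ (vertexSet w)
    rw [hcm]
    exact Finset.centerMass_mem_convexHull _ (fun r _ => hlam0 r)
      (by rw [hlamsum]; norm_num) (fun r _ => ⟨r, hVdef r⟩)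

end PositroidPaper
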